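/- arXiv:2112.14433 — 2 statements merged into one kernel-verified Lean document; each statement's English description precedes it below -/
import Mathlib

section
/- Let G be an N×E real matrix, let Λ be an E×E symmetric positive-definite real matrix, and let σ² > 0. Then Λ Gᵀ (G Λ Gᵀ + σ² I_N)⁻¹ G Λ = (GᵀG + σ² Λ⁻¹)⁻¹ GᵀG Λ. Consequently, setting α = GᵀG/N, for every Φ ∈ ℝ^E the standard GP posterior variance with degenerate kernel, κ(x,x) − k ᵀ (K + σ² I_N)⁻¹ k where K = G Λ Gᵀ, k = G Λ Φ and κ(x,x) = Φᵀ Λ Φ, equals the distributed-form variance κ(x,x) − Φᵀ (α + (σ²/N) Λ⁻¹)⁻¹ α Λ Φ. -/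
open Matrix

/-- The identity `ΛGᵀ(GΛGᵀ + σ²I)⁻¹GΛ = (GᵀG + σ²Λ⁻¹)⁻¹GᵀGΛ`;
consequently, with `α = GᵀG/N`, the standard GP posterior variance with the
degenerate kernel equals the distributed-form variance
`κ(x,x) − Φᵀ(α + (σ²/N)Λ⁻¹)⁻¹αΛΦ`. -/
theorem distributed_posterior_variance_eq
    (N E : ℕ) (hN : 0 < N)
    (G : Matrix (Fin N) (Fin E) ℝ)
    (Λ : Matrix (Fin E) (Fin E) ℝ) (hΛ : Λ.PosDef)
    (σ2 : ℝ) (hσ2 : 0 < σ2)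
    (α : Matrix (Fin E) (Fin E) ℝ) (hα : α = (1 / (N : ℝ)) • (Gᵀ * G)) :
    Λ * Gᵀ * (G * Λ * Gᵀ + σ2 • (1 : Matrix (Fin N) (Fin N) ℝ))⁻¹ * G * Λ
      = (Gᵀ * G + σ2 • Λ⁻¹)⁻¹ * (Gᵀ * G) * Λ ∧
    ∀ Φ : Fin E → ℝ,
      Φ ⬝ᵥ Λ *ᵥ Φ
        - ((G * Λ) *ᵥ Φ) ⬝ᵥ
            ((G * Λ * Gᵀ + σ2 • (1 : Matrix (Fin N) (Fin N) ℝ))⁻¹ *ᵥ ((G * Λ) *ᵥ Φ))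
      = Φ ⬝ᵥ Λ *ᵥ Φ
        - Φ ⬝ᵥ ((α + (σ2 / (N : ℝ)) • Λ⁻¹)⁻¹ * α * Λ) *ᵥ Φ := by
  set A : Matrix (Fin N) (Fin N) ℝ := G * Λ * Gᵀ + σ2 • (1 : Matrix (Fin N) (Fin N) ℝ) with hA
  set B : Matrix (Fin E) (Fin E) ℝ := Gᵀ * G + σ2 • Λ⁻¹ with hB
  -- Λ is symmetric
  have hΛsymm : Λᵀ = Λ := by
    have := hΛ.isHermitian
    rwa [Matrix.IsHermitian, conjTranspose_eq_transpose_of_trivial] at this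
  have hΛinv : (Λ⁻¹).PosDef := hΛ.inv
  have hΛunit : IsUnit Λ.det := isUnit_iff_ne_zero.mpr hΛ.det_pos.ne'
  -- A is positive definite, hence invertible
  have hGΛGt : (G * Λ * Gᵀ).PosSemidef := by
    have := hΛ.posSemidef.mul_mul_conjTranspose_same G
    rwa [conjTranspose_eq_transpose_of_trivial] at this
  have hσI : (σ2 • (1 : Matrix (Fin N) (Fin N) ℝ)).PosDef := by
    rw [smul_one_eq_diagonal]
    exact posDef_diagonal_iff.mpr fun _ => hσ2
  have hApd : A.PosDef := Matrix.PosDef.posSemidef_add hGΛGt hσI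
  have hAunit : IsUnit A.det := isUnit_iff_ne_zero.mpr hApd.det_pos.ne'
  -- B is positive definite, hence invertible
  have hGtG : (Gᵀ * G).PosSemidef := by
    have := Matrix.posSemidef_conjTranspose_mul_self G
    rwa [conjTranspose_eq_transpose_of_trivial] at this
  have hσΛ : (σ2 • Λ⁻¹).PosDef := by
    constructor
    · rw [Matrix.IsHermitian, conjTranspose_smul]
      congr 1
      rw [conjTranspose_eq_transpose_of_trivial]
      have := hΛinv.isHermitian
      rwa [Matrix.IsHermitian, conjTranspose_eq_transpose_of_trivial] at this
    · intro x hx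
      exact (hΛinv.smul hσ2).2 hx
  have hBpd : B.PosDef := Matrix.PosDef.posSemidef_add hGtG hσΛ
  have hBunit : IsUnit B.det := isUnit_iff_ne_zero.mpr hBpd.det_pos.ne'
  -- the key algebraic identity: B * (Λ * Gᵀ) = Gᵀ * A
  have hkey : B * (Λ * Gᵀ) = Gᵀ * A := by
    rw [hA, hB, Matrix.add_mul, Matrix.mul_add]
    congr 1
    · simp [Matrix.mul_assoc]
    · rw [Matrix.smul_mul, Matrix.mul_smul, Matrix.mul_one, ← Matrix.mul_assoc,
        Matrix.nonsing_inv_mul Λ hΛunit, Matrix.one_mul]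
  -- hence Λ Gᵀ A⁻¹ = B⁻¹ Gᵀ
  have hmain : Λ * Gᵀ * A⁻¹ = B⁻¹ * Gᵀ := by
    have h1 : Λ * Gᵀ = B⁻¹ * (Gᵀ * A) := by
      rw [← hkey, ← Matrix.mul_assoc, Matrix.nonsing_inv_mul B hBunit, Matrix.one_mul]
    calc Λ * Gᵀ * A⁻¹ = B⁻¹ * (Gᵀ * A) * A⁻¹ := by rw [← h1]
      _ = B⁻¹ * Gᵀ * (A * A⁻¹) := by simp [Matrix.mul_assoc]
      _ = B⁻¹ * Gᵀ := by rw [Matrix.mul_nonsing_inv A hAunit, Matrix.mul_one]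
  have hfirst : Λ * Gᵀ * A⁻¹ * G * Λ = B⁻¹ * (Gᵀ * G) * Λ := by
    rw [hmain]; simp [Matrix.mul_assoc]
  refine ⟨hfirst, fun Φ => ?_⟩
  congr 1
  -- rewrite the distributed form: α + (σ2/N)•Λ⁻¹ = (1/N) • B, and its inverse
  have hNne : (N : ℝ) ≠ 0 := Nat.cast_ne_zero.mpr hN.ne'
  have hc : (1 / (N : ℝ)) ≠ 0 := one_div_ne_zero hNne
  have hsum : α + (σ2 / (N : ℝ)) • Λ⁻¹ = (1 / (N : ℝ)) • B := by
    rw [hα, hB, smul_add, smul_smul]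
    congr 2
    field_simp
  have : Invertible (1 / (N : ℝ)) := invertibleOfNonzero hc
  have hinv : ((1 / (N : ℝ)) • B)⁻¹ = ⅟(1 / (N : ℝ)) • B⁻¹ :=
    Matrix.inv_smul (A := B) (1 / (N : ℝ)) hBunit
  have hdist : (α + (σ2 / (N : ℝ)) • Λ⁻¹)⁻¹ * α * Λ = B⁻¹ * (Gᵀ * G) * Λ := by
    rw [hsum, hinv, hα, Matrix.smul_mul, Matrix.mul_smul, smul_smul, invOf_mul_self, one_smul]
  rw [hdist, ← hfirst]
  -- now reduce the quadratic forms
  have hMT : (G * Λ)ᵀ = Λ * Gᵀ := by rw [Matrix.transpose_mul, hΛsymm]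
  have hrw : Λ * Gᵀ * A⁻¹ * G * Λ = (G * Λ)ᵀ * A⁻¹ * (G * Λ) := by
    rw [hMT]; simp [Matrix.mul_assoc]
  rw [hrw]
  conv_rhs => rw [← Matrix.mulVec_mulVec, ← Matrix.mulVec_mulVec, Matrix.dotProduct_mulVec,
    Matrix.vecMul_transpose]
end

section
/- Let α be an E×E symmetric positive-semidefinite real matrix, let Λ be an E×E symmetric positive-definite real matrix, and let c > 0. Then α + cΛ⁻¹ is positive definite, and for every Φ ∈ ℝ^E the distributed posterior variance satisfies the identity Φᵀ Λ Φ − Φᵀ (α + c Λ⁻¹)⁻¹ α Λ Φ = c · Φᵀ (α + c Λ⁻¹)⁻¹ Φ. In particular the posterior variance Σ_E = ΦᵀΛΦ − Φᵀ(α + cΛ⁻¹)⁻¹αΛΦ is nonnegative, and is strictly positive whenever Φ ≠ 0. -/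
open Matrix

lemma smul_posDef' {E : ℕ} {M : Matrix (Fin E) (Fin E) ℝ} (hM : M.PosDef)
    {c : ℝ} (hc : 0 < c) : (c • M).PosDef := by
  refine .of_dotProduct_mulVec_pos (by rw [IsHermitian, conjTranspose_smul, hM.1.eq]; simp) fun x hx => ?_
  rw [smul_mulVec, dotProduct_smul, smul_eq_mul]
  exact mul_pos hc (hM.dotProduct_mulVec_pos hx)

/-- With `α ⪰ 0` symmetric, `Λ ≻ 0` symmetric and `c > 0`, the matrix
`α + cΛ⁻¹` is positive definite, the posterior variance identity
`ΦᵀΛΦ − Φᵀ(α + cΛ⁻¹)⁻¹αΛΦ = c Φᵀ(α + cΛ⁻¹)⁻¹Φ` holds, the posterior variance is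
nonnegative, and it is strictly positive whenever `Φ ≠ 0`. -/
theorem posterior_variance_identity_nonneg
    (E : ℕ)
    (α : Matrix (Fin E) (Fin E) ℝ) (hα : α.PosSemidef)
    (Λ : Matrix (Fin E) (Fin E) ℝ) (hΛ : Λ.PosDef)
    (c : ℝ) (hc : 0 < c) :
    (α + c • Λ⁻¹).PosDef ∧
    ∀ Φ : Fin E → ℝ,
      (Φ ⬝ᵥ Λ *ᵥ Φ - Φ ⬝ᵥ ((α + c • Λ⁻¹)⁻¹ * α * Λ) *ᵥ Φ
          = c * (Φ ⬝ᵥ (α + c • Λ⁻¹)⁻¹ *ᵥ Φ)) ∧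
      0 ≤ Φ ⬝ᵥ Λ *ᵥ Φ - Φ ⬝ᵥ ((α + c • Λ⁻¹)⁻¹ * α * Λ) *ᵥ Φ ∧
      (Φ ≠ 0 → 0 < Φ ⬝ᵥ Λ *ᵥ Φ - Φ ⬝ᵥ ((α + c • Λ⁻¹)⁻¹ * α * Λ) *ᵥ Φ) := by
  set M := α + c • Λ⁻¹ with hMdef
  have hM : M.PosDef := Matrix.PosDef.posSemidef_add hα (smul_posDef' hΛ.inv hc)
  letI := hM.isUnit.invertible
  have key : Λ - M⁻¹ * α * Λ = c • M⁻¹ := by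
    have h1 : M⁻¹ * ((M - α) * Λ) = Λ - M⁻¹ * α * Λ := by
      rw [sub_mul, mul_sub, ← mul_assoc, inv_mul_of_invertible, one_mul, mul_assoc]
    have h2 : M - α = c • Λ⁻¹ := by rw [hMdef]; abel
    have h3 : Λ⁻¹ * Λ = 1 := nonsing_inv_mul Λ ((Matrix.isUnit_iff_isUnit_det Λ).mp hΛ.isUnit)
    rw [← h1, h2, smul_mul_assoc, h3, Matrix.mul_smul, mul_one]
  have hid : ∀ Φ : Fin E → ℝ,
      Φ ⬝ᵥ Λ *ᵥ Φ - Φ ⬝ᵥ (M⁻¹ * α * Λ) *ᵥ Φ = c * (Φ ⬝ᵥ M⁻¹ *ᵥ Φ) := by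
    intro Φ
    rw [← dotProduct_sub, ← sub_mulVec, key, smul_mulVec, dotProduct_smul, smul_eq_mul]
  refine ⟨hM, fun Φ => ⟨hid Φ, ?_, ?_⟩⟩
  · rw [hid Φ]
    have := hM.inv.posSemidef.dotProduct_mulVec_nonneg Φ
    simp only [star_trivial] at this
    positivity
  · intro hΦ
    rw [hid Φ]
    have := hM.inv.dotProduct_mulVec_pos hΦ
    simp only [star_trivial] at this
    positivity
end
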